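/- Let u ∈ S(ℝ²) and m, n ∈ ℕ. Then ‖∂_x^m ∂_y^n u‖_{L²(ℝ²)} ≤ ‖∂_x^{2m} u‖_{L²(ℝ²)}^{1/2} · ‖∂_y^{2n} u‖_{L²(ℝ²)}^{1/2}. -/

import Mathlib

open MeasureTheory

noncomputable def px2 (f : ℝ × ℝ → ℝ) : ℝ × ℝ → ℝ :=
  fun p => deriv (fun x' => f (x', p.2)) p.1

noncomputable def py2 (f : ℝ × ℝ → ℝ) : ℝ × ℝ → ℝ :=
  fun p => deriv (fun y' => f (p.1, y')) p.2

namespace MixedInterpAux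

open SchwartzMap Filter

noncomputable def D1 : 𝓢(ℝ × ℝ, ℝ) →L[ℝ] 𝓢(ℝ × ℝ, ℝ) := LineDeriv.lineDerivOpCLM ℝ 𝓢(ℝ × ℝ, ℝ) ((1 : ℝ), (0 : ℝ))
noncomputable def D2 : 𝓢(ℝ × ℝ, ℝ) →L[ℝ] 𝓢(ℝ × ℝ, ℝ) := LineDeriv.lineDerivOpCLM ℝ 𝓢(ℝ × ℝ, ℝ) ((0 : ℝ), (1 : ℝ))

lemma pderivCLM_apply (m : ℝ × ℝ) (f : 𝓢(ℝ × ℝ, ℝ)) (x : ℝ × ℝ) :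
    LineDeriv.lineDerivOpCLM ℝ 𝓢(ℝ × ℝ, ℝ) m f x = fderiv ℝ f x m := rfl

lemma hasDerivAt_slice1 (f : 𝓢(ℝ × ℝ, ℝ)) (x y : ℝ) :
    HasDerivAt (fun x' => f (x', y)) (D1 f (x, y)) x := by
  have hg : HasDerivAt (fun x' : ℝ => (x', y)) ((1 : ℝ), (0 : ℝ)) x :=
    (hasDerivAt_id x).prodMk (hasDerivAt_const x y)
  have hf : HasFDerivAt f (fderiv ℝ f (x, y)) (x, y) :=
    (f.differentiableAt).hasFDerivAt
  simpa [D1, pderivCLM_apply, SchwartzMap.lineDerivOp_apply_eq_fderiv, Function.comp_def] using hf.comp_hasDerivAt x hg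

lemma hasDerivAt_slice2 (f : 𝓢(ℝ × ℝ, ℝ)) (x y : ℝ) :
    HasDerivAt (fun y' => f (x, y')) (D2 f (x, y)) y := by
  have hg : HasDerivAt (fun y' : ℝ => (x, y')) ((0 : ℝ), (1 : ℝ)) y :=
    (hasDerivAt_const y x).prodMk (hasDerivAt_id y)
  have hf : HasFDerivAt f (fderiv ℝ f (x, y)) (x, y) :=
    (f.differentiableAt).hasFDerivAt
  simpa [D2, pderivCLM_apply, SchwartzMap.lineDerivOp_apply_eq_fderiv, Function.comp_def] using hf.comp_hasDerivAt y hg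

lemma px2_eq (f : 𝓢(ℝ × ℝ, ℝ)) : px2 ⇑f = ⇑(D1 f) := by
  funext p
  exact (hasDerivAt_slice1 f p.1 p.2).deriv

lemma py2_eq (f : 𝓢(ℝ × ℝ, ℝ)) : py2 ⇑f = ⇑(D2 f) := by
  funext p
  exact (hasDerivAt_slice2 f p.1 p.2).deriv

lemma px2_iter_eq (k : ℕ) (f : 𝓢(ℝ × ℝ, ℝ)) : px2^[k] ⇑f = ⇑((⇑D1)^[k] f) := by
  induction k generalizing f with
  | zero => rfl
  | succ k ih =>
    rw [Function.iterate_succ_apply, Function.iterate_succ_apply, px2_eq, ih]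

lemma py2_iter_eq (k : ℕ) (f : 𝓢(ℝ × ℝ, ℝ)) : py2^[k] ⇑f = ⇑((⇑D2)^[k] f) := by
  induction k generalizing f with
  | zero => rfl
  | succ k ih =>
    rw [Function.iterate_succ_apply, Function.iterate_succ_apply, py2_eq, ih]

/-- Commutation of the two partial derivatives on Schwartz functions. -/
lemma D_comm (f : 𝓢(ℝ × ℝ, ℝ)) : D1 (D2 f) = D2 (D1 f) := by
  ext p
  have hder : ∀ q, HasFDerivAt (⇑f) (fderiv ℝ (⇑f) q) q := fun q =>
    (f.differentiableAt).hasFDerivAt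
  have hc := (contDiff_infty_iff_fderiv.mp (f.smooth ⊤)).2
  have hx : HasFDerivAt (fderiv ℝ (⇑f)) (fderiv ℝ (fderiv ℝ (⇑f)) p) p :=
    (hc.differentiable (by simp) p).hasFDerivAt
  have hsymm := second_derivative_symmetric hder hx
  have key : ∀ v w : ℝ × ℝ,
      fderiv ℝ (fun q => fderiv ℝ (⇑f) q w) p v = fderiv ℝ (fderiv ℝ (⇑f)) p v w := by
    intro v w
    have h1 : HasFDerivAt (fun q => fderiv ℝ (⇑f) q w)
        ((ContinuousLinearMap.apply ℝ ℝ w).comp (fderiv ℝ (fderiv ℝ (⇑f)) p)) p :=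
      (ContinuousLinearMap.apply ℝ ℝ w).hasFDerivAt.comp p hx
    rw [h1.fderiv]
    rfl
  have e1 : D1 (D2 f) p = fderiv ℝ (fun q => fderiv ℝ (⇑f) q ((0 : ℝ), (1 : ℝ))) p
      ((1 : ℝ), (0 : ℝ)) := by
    simp only [D1, D2, pderivCLM_apply]
    have h2 : ⇑(LineDeriv.lineDerivOpCLM ℝ 𝓢(ℝ × ℝ, ℝ) ((0:ℝ),(1:ℝ)) f) = fun q => fderiv ℝ (⇑f) q ((0:ℝ),(1:ℝ)) :=
      funext fun q => pderivCLM_apply _ _ _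
    rw [h2]
  have e2 : D2 (D1 f) p = fderiv ℝ (fun q => fderiv ℝ (⇑f) q ((1 : ℝ), (0 : ℝ))) p
      ((0 : ℝ), (1 : ℝ)) := by
    simp only [D1, D2, pderivCLM_apply]
    have h2 : ⇑(LineDeriv.lineDerivOpCLM ℝ 𝓢(ℝ × ℝ, ℝ) ((1:ℝ),(0:ℝ)) f) = fun q => fderiv ℝ (⇑f) q ((1:ℝ),(0:ℝ)) :=
      funext fun q => pderivCLM_apply _ _ _
    rw [h2]
  rw [e1, e2, key, key, hsymm]

lemma D1_D2_iter (b : ℕ) (g : 𝓢(ℝ × ℝ, ℝ)) : D1 ((⇑D2)^[b] g) = (⇑D2)^[b] (D1 g) := by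
  induction b generalizing g with
  | zero => rfl
  | succ b ihb =>
    rw [Function.iterate_succ_apply, Function.iterate_succ_apply, ← D_comm, ihb]

lemma D_comm_iter (a b : ℕ) (f : 𝓢(ℝ × ℝ, ℝ)) :
    (⇑D1)^[a] ((⇑D2)^[b] f) = (⇑D2)^[b] ((⇑D1)^[a] f) := by
  induction a generalizing f with
  | zero => rfl
  | succ a ih =>
    rw [Function.iterate_succ_apply', Function.iterate_succ_apply', ih, D1_D2_iter]

/-- Boundedness of a Schwartz function. -/
lemma schwartz_bound (f : 𝓢(ℝ × ℝ, ℝ)) : ∃ C, ∀ p, ‖f p‖ ≤ C := by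
  obtain ⟨C, hC⟩ := f.decay 0 0
  exact ⟨C, fun p => by simpa using hC.2 p⟩

/-- Integrability of the slice of a Schwartz function. -/
lemma slice_integrable1 (f : 𝓢(ℝ × ℝ, ℝ)) (y : ℝ) :
    Integrable (fun x => f (x, y)) volume := by
  obtain ⟨C0, hC0⟩ := f.decay 0 0
  obtain ⟨C2, hC2⟩ := f.decay 2 0
  have hC0' : ∀ p, ‖f p‖ ≤ C0 := fun p => by simpa using hC0.2 p
  have hC2' : ∀ p : ℝ × ℝ, ‖p‖ ^ 2 * ‖f p‖ ≤ C2 := fun p => by simpa using hC2.2 p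
  refine Integrable.mono' ((integrable_inv_one_add_sq).const_mul (C0 + C2))
    ((f.continuous.comp (continuous_id.prodMk continuous_const)).aestronglyMeasurable)
    (Filter.Eventually.of_forall fun x => ?_)
  have h1 : (0 : ℝ) < 1 + x ^ 2 := by positivity
  rw [← div_eq_mul_inv, le_div_iff₀ h1]
  have hx : x ^ 2 * ‖f (x, y)‖ ≤ C2 := by
    refine le_trans ?_ (hC2' (x, y))
    have habs : |x| ≤ ‖((x : ℝ), y)‖ := by simpa using norm_fst_le ((x : ℝ), y)
    have h2 : x ^ 2 ≤ ‖((x : ℝ), y)‖ ^ 2 := by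
      rw [← sq_abs]
      exact pow_le_pow_left₀ (abs_nonneg x) habs 2
    exact mul_le_mul_of_nonneg_right h2 (norm_nonneg _)
  calc ‖f (x, y)‖ * (1 + x ^ 2) = ‖f (x, y)‖ + x ^ 2 * ‖f (x, y)‖ := by ring
    _ ≤ C0 + C2 := add_le_add (hC0' (x, y)) hx

lemma slice_integrable2 (f : 𝓢(ℝ × ℝ, ℝ)) (x : ℝ) :
    Integrable (fun y => f (x, y)) volume := by
  obtain ⟨C0, hC0⟩ := f.decay 0 0
  obtain ⟨C2, hC2⟩ := f.decay 2 0
  have hC0' : ∀ p, ‖f p‖ ≤ C0 := fun p => by simpa using hC0.2 p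
  have hC2' : ∀ p : ℝ × ℝ, ‖p‖ ^ 2 * ‖f p‖ ≤ C2 := fun p => by simpa using hC2.2 p
  refine Integrable.mono' ((integrable_inv_one_add_sq).const_mul (C0 + C2))
    ((f.continuous.comp (continuous_const.prodMk continuous_id)).aestronglyMeasurable)
    (Filter.Eventually.of_forall fun y => ?_)
  have h1 : (0 : ℝ) < 1 + y ^ 2 := by positivity
  rw [← div_eq_mul_inv, le_div_iff₀ h1]
  have hy : y ^ 2 * ‖f (x, y)‖ ≤ C2 := by
    refine le_trans ?_ (hC2' (x, y))
    have habs : |y| ≤ ‖((x : ℝ), y)‖ := by simpa using norm_snd_le ((x : ℝ), y)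
    have h2 : y ^ 2 ≤ ‖((x : ℝ), y)‖ ^ 2 := by
      rw [← sq_abs]
      exact pow_le_pow_left₀ (abs_nonneg y) habs 2
    exact mul_le_mul_of_nonneg_right h2 (norm_nonneg _)
  calc ‖f (x, y)‖ * (1 + y ^ 2) = ‖f (x, y)‖ + y ^ 2 * ‖f (x, y)‖ := by ring
    _ ≤ C0 + C2 := add_le_add (hC0' (x, y)) hy

lemma mul_integrable (f g : 𝓢(ℝ × ℝ, ℝ)) :
    Integrable (fun p => f p * g p) volume := by
  obtain ⟨C, hC⟩ := schwartz_bound f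
  exact (g.integrable (μ := volume)).bdd_mul f.continuous.aestronglyMeasurable (Filter.Eventually.of_forall hC)

lemma slice_mul_integrable1 (f g : 𝓢(ℝ × ℝ, ℝ)) (y : ℝ) :
    Integrable (fun x => f (x, y) * g (x, y)) volume := by
  obtain ⟨C, hC⟩ := schwartz_bound f
  exact (slice_integrable1 g y).bdd_mul
    ((f.continuous.comp (continuous_id.prodMk continuous_const)).aestronglyMeasurable)
    (Filter.Eventually.of_forall fun x => hC (x, y))

lemma slice_mul_integrable2 (f g : 𝓢(ℝ × ℝ, ℝ)) (x : ℝ) :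
    Integrable (fun y => f (x, y) * g (x, y)) volume := by
  obtain ⟨C, hC⟩ := schwartz_bound f
  exact (slice_integrable2 g x).bdd_mul
    ((f.continuous.comp (continuous_const.prodMk continuous_id)).aestronglyMeasurable)
    (Filter.Eventually.of_forall fun y => hC (x, y))

/-- Integration by parts in the first variable. -/
lemma ibp1 (f g : 𝓢(ℝ × ℝ, ℝ)) :
    ∫ p, (D1 f) p * g p = -∫ p, f p * (D1 g) p := by
  have h1 : Integrable (fun p : ℝ × ℝ => (D1 f) p * g p) volume := mul_integrable _ _
  have h2 : Integrable (fun p : ℝ × ℝ => f p * (D1 g) p) volume := mul_integrable _ _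
  rw [MeasureTheory.Measure.volume_eq_prod] at h1 h2 ⊢
  rw [integral_prod_symm _ h1, integral_prod_symm _ h2, ← integral_neg]
  refine integral_congr_ae (Filter.Eventually.of_forall fun y => ?_)
  have := integral_mul_deriv_eq_deriv_mul_of_integrable
    (u := fun x => f (x, y)) (v := fun x => g (x, y))
    (u' := fun x => (D1 f) (x, y)) (v' := fun x => (D1 g) (x, y))
    (fun x _ => hasDerivAt_slice1 f x y) (fun x _ => hasDerivAt_slice1 g x y)
    (slice_mul_integrable1 f (D1 g) y) (slice_mul_integrable1 (D1 f) g y)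
    (slice_mul_integrable1 f g y)
  simp only at this ⊢
  linarith [this]

/-- Integration by parts in the second variable. -/
lemma ibp2 (f g : 𝓢(ℝ × ℝ, ℝ)) :
    ∫ p, (D2 f) p * g p = -∫ p, f p * (D2 g) p := by
  have h1 : Integrable (fun p : ℝ × ℝ => (D2 f) p * g p) volume := mul_integrable _ _
  have h2 : Integrable (fun p : ℝ × ℝ => f p * (D2 g) p) volume := mul_integrable _ _
  rw [MeasureTheory.Measure.volume_eq_prod] at h1 h2 ⊢
  rw [integral_prod _ h1, integral_prod _ h2, ← integral_neg]
  refine integral_congr_ae (Filter.Eventually.of_forall fun x => ?_)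
  have := integral_mul_deriv_eq_deriv_mul_of_integrable
    (u := fun y => f (x, y)) (v := fun y => g (x, y))
    (u' := fun y => (D2 f) (x, y)) (v' := fun y => (D2 g) (x, y))
    (fun y _ => hasDerivAt_slice2 f x y) (fun y _ => hasDerivAt_slice2 g x y)
    (slice_mul_integrable2 f (D2 g) x) (slice_mul_integrable2 (D2 f) g x)
    (slice_mul_integrable2 f g x)
  simp only at this ⊢
  linarith [this]

lemma ibp1_iter (a : ℕ) (f g : 𝓢(ℝ × ℝ, ℝ)) :
    ∫ p, ((⇑D1)^[a] f) p * g p = (-1 : ℝ) ^ a * ∫ p, f p * ((⇑D1)^[a] g) p := by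
  induction a generalizing f g with
  | zero => simp
  | succ a ih =>
    rw [Function.iterate_succ_apply, ih (D1 f) g, ibp1 f ((⇑D1)^[a] g)]
    rw [show D1 ((⇑D1)^[a] g) = (⇑D1)^[a + 1] g from (Function.iterate_succ_apply' ⇑D1 a g).symm]
    ring

lemma ibp2_iter (a : ℕ) (f g : 𝓢(ℝ × ℝ, ℝ)) :
    ∫ p, ((⇑D2)^[a] f) p * g p = (-1 : ℝ) ^ a * ∫ p, f p * ((⇑D2)^[a] g) p := by
  induction a generalizing f g with
  | zero => simp
  | succ a ih =>
    rw [Function.iterate_succ_apply, ih (D2 f) g, ibp2 f ((⇑D2)^[a] g)]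
    rw [show D2 ((⇑D2)^[a] g) = (⇑D2)^[a + 1] g from (Function.iterate_succ_apply' ⇑D2 a g).symm]
    ring

/-- The key integral identity. -/
lemma key_identity (u : 𝓢(ℝ × ℝ, ℝ)) (m n : ℕ) :
    ∫ p, ((⇑D1)^[m] ((⇑D2)^[n] u)) p * ((⇑D1)^[m] ((⇑D2)^[n] u)) p
      = (-1 : ℝ) ^ (m + n) * ∫ p, ((⇑D1)^[2 * m] u) p * ((⇑D2)^[2 * n] u) p := by
  rw [ibp1_iter m ((⇑D2)^[n] u) ((⇑D1)^[m] ((⇑D2)^[n] u))]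
  have e1 : (⇑D1)^[m] ((⇑D1)^[m] ((⇑D2)^[n] u)) = (⇑D2)^[n] ((⇑D1)^[2 * m] u) := by
    rw [← Function.iterate_add_apply, ← two_mul, D_comm_iter]
  rw [e1]
  rw [ibp2_iter n u ((⇑D2)^[n] ((⇑D1)^[2 * m] u))]
  have e2 : (⇑D2)^[n] ((⇑D2)^[n] ((⇑D1)^[2 * m] u)) = (⇑D2)^[2 * n] ((⇑D1)^[2 * m] u) := by
    rw [← Function.iterate_add_apply, ← two_mul]
  rw [e2]
  have e3 : ∫ p, ((⇑D1)^[2 * m] u) p * ((⇑D2)^[2 * n] u) p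
      = ∫ p, u p * ((⇑D2)^[2 * n] ((⇑D1)^[2 * m] u)) p := by
    have := ibp1_iter (2 * m) u ((⇑D2)^[2 * n] u)
    rw [D_comm_iter] at this
    simpa [pow_mul] using this
  rw [← e3, ← mul_assoc, ← pow_add]

lemma schwartz_memL2 (f : 𝓢(ℝ × ℝ, ℝ)) : MemLp ⇑f 2 volume := by
  rw [memLp_two_iff_integrable_sq f.continuous.aestronglyMeasurable]
  simpa [pow_two] using mul_integrable f f

lemma eLp_eq (f : 𝓢(ℝ × ℝ, ℝ)) :
    eLpNorm ⇑f 2 volume = ENNReal.ofReal ((∫ p, f p ^ 2) ^ (2⁻¹ : ℝ)) := by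
  rw [(schwartz_memL2 f).eLpNorm_eq_integral_rpow_norm (by norm_num) (by norm_num)]
  have h2 : (2 : ENNReal).toReal = (2 : ℝ) := by norm_num
  rw [h2]
  congr 1
  congr 1
  refine integral_congr_ae (Filter.Eventually.of_forall fun p => ?_)
  simp only [Real.rpow_two, Real.norm_eq_abs, sq_abs]

end MixedInterpAux

/-- Interpolation: `‖∂_x^m ∂_y^n u‖_{L²} ≤ ‖∂_x^{2m} u‖_{L²}^{1/2} ‖∂_y^{2n} u‖_{L²}^{1/2}`. -/
theorem mixed_derivative_interpolation (u : SchwartzMap (ℝ × ℝ) ℝ) (m n : ℕ) :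
    eLpNorm (px2^[m] (py2^[n] (⇑u))) 2 volume
      ≤ (eLpNorm (px2^[2 * m] (⇑u)) 2 volume) ^ ((1 : ℝ) / 2)
        * (eLpNorm (py2^[2 * n] (⇑u)) 2 volume) ^ ((1 : ℝ) / 2) := by
  classical
  open MixedInterpAux in
  set h : SchwartzMap (ℝ × ℝ) ℝ := (⇑D1)^[m] ((⇑D2)^[n] u) with hh
  set g1 : SchwartzMap (ℝ × ℝ) ℝ := (⇑D1)^[2 * m] u with hg1
  set g2 : SchwartzMap (ℝ × ℝ) ℝ := (⇑D2)^[2 * n] u with hg2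
  have eq1 : px2^[m] (py2^[n] (⇑u)) = ⇑h := by
    rw [py2_iter_eq, px2_iter_eq]
  have eq2 : px2^[2 * m] (⇑u) = ⇑g1 := px2_iter_eq _ _
  have eq3 : py2^[2 * n] (⇑u) = ⇑g2 := py2_iter_eq _ _
  rw [eq1, eq2, eq3, eLp_eq h, eLp_eq g1, eLp_eq g2]
  set Ih : ℝ := ∫ p, h p ^ 2 with hIh
  set I1 : ℝ := ∫ p, g1 p ^ 2 with hI1
  set I2 : ℝ := ∫ p, g2 p ^ 2 with hI2
  have hIh0 : 0 ≤ Ih := integral_nonneg fun p => sq_nonneg _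
  have hI10 : 0 ≤ I1 := integral_nonneg fun p => sq_nonneg _
  have hI20 : 0 ≤ I2 := integral_nonneg fun p => sq_nonneg _
  -- Hölder
  have hpq : Real.HolderConjugate 2 2 := Real.holderConjugate_iff.mpr ⟨by norm_num, by norm_num⟩
  have hmem1 : MemLp (fun p => |g1 p|) (ENNReal.ofReal 2) volume := by
    have := (schwartz_memL2 g1).norm
    simpa [Real.norm_eq_abs, ENNReal.ofReal_ofNat] using this
  have hmem2 : MemLp (fun p => |g2 p|) (ENNReal.ofReal 2) volume := by
    have := (schwartz_memL2 g2).norm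
    simpa [Real.norm_eq_abs, ENNReal.ofReal_ofNat] using this
  have holder := integral_mul_le_Lp_mul_Lq_of_nonneg (μ := volume) hpq
    (f := fun p => |g1 p|) (g := fun p => |g2 p|)
    (Filter.Eventually.of_forall fun p => abs_nonneg _)
    (Filter.Eventually.of_forall fun p => abs_nonneg _) hmem1 hmem2
  have habs1 : ∀ p : ℝ × ℝ, |g1 p| ^ (2:ℝ) = g1 p ^ 2 := fun p => by
    rw [show ((2:ℝ)) = ((2:ℕ):ℝ) by norm_num, Real.rpow_natCast, sq_abs]
  have habs2 : ∀ p : ℝ × ℝ, |g2 p| ^ (2:ℝ) = g2 p ^ 2 := fun p => by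
    rw [show ((2:ℝ)) = ((2:ℕ):ℝ) by norm_num, Real.rpow_natCast, sq_abs]
  simp only [habs1, habs2] at holder
  -- key identity
  have hkey : Ih = (-1 : ℝ) ^ (m + n) * ∫ p, g1 p * g2 p := by
    rw [hIh]
    have := key_identity u m n
    simpa [pow_two] using this
  have hIh_le : Ih ≤ I1 ^ ((1:ℝ)/2) * I2 ^ ((1:ℝ)/2) := by
    have h1 : Ih ≤ |∫ p, g1 p * g2 p| := by
      rw [hkey]
      rcases Nat.even_or_odd (m + n) with he | ho
      · rw [he.neg_one_pow, one_mul]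
        exact le_abs_self _
      · rw [ho.neg_one_pow, neg_one_mul]
        exact neg_le_abs _
    have h2 : |∫ p, g1 p * g2 p| ≤ ∫ p, |g1 p| * |g2 p| := by
      have hni := MeasureTheory.norm_integral_le_integral_norm (μ := volume)
        (f := fun p : ℝ × ℝ => g1 p * g2 p)
      simpa [Real.norm_eq_abs, abs_mul] using hni
    calc Ih ≤ ∫ p, |g1 p| * |g2 p| := h1.trans h2
      _ ≤ I1 ^ ((1:ℝ)/2) * I2 ^ ((1:ℝ)/2) := holder
  -- pass to ENNReal
  have hr1 : (0:ℝ) ≤ Ih ^ (2⁻¹:ℝ) := Real.rpow_nonneg hIh0 _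
  rw [ENNReal.ofReal_rpow_of_nonneg (Real.rpow_nonneg hI10 _) (by norm_num : (0:ℝ) ≤ 1/2),
    ENNReal.ofReal_rpow_of_nonneg (Real.rpow_nonneg hI20 _) (by norm_num : (0:ℝ) ≤ 1/2),
    ← ENNReal.ofReal_mul (Real.rpow_nonneg (Real.rpow_nonneg hI10 _) _)]
  refine ENNReal.ofReal_le_ofReal ?_
  calc Ih ^ (2⁻¹:ℝ) ≤ (I1 ^ ((1:ℝ)/2) * I2 ^ ((1:ℝ)/2)) ^ (2⁻¹:ℝ) :=
        Real.rpow_le_rpow hIh0 hIh_le (by norm_num)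
    _ = (I1 ^ (2⁻¹:ℝ)) ^ ((1:ℝ)/2) * (I2 ^ (2⁻¹:ℝ)) ^ ((1:ℝ)/2) := by
        rw [Real.mul_rpow (Real.rpow_nonneg hI10 _) (Real.rpow_nonneg hI20 _),
          ← Real.rpow_mul hI10, ← Real.rpow_mul hI20,
          ← Real.rpow_mul hI10, ← Real.rpow_mul hI20]
        norm_num
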